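/- If I is a cellular binomial ideal in k[Q] (every monomial is a nonzerodivisor or nilpotent modulo I) and the congruence induced by I has a nil class, then I contains a monomial; consequently I is maximal among binomial ideals inducing its congruence. -/
import Mathlib


/-! A cellular binomial ideal whose induced congruence has a nil class
contains a monomial, and consequently is maximal among binomial ideals
inducing its congruence.  (The nil class — the class of the monomials lying
in the ideal — is distinct from the class of the identity, as depicted in the
paper's figures; without this the claim degenerates.) -/

variable {k : Type*} [Field k] {Q : Type*} [AddCommMonoid Q]

/-- The monomial `t^q` in the monoid algebra `k[Q]`. -/
noncomputable def mono (k : Type*) [Field k] {Q : Type*} [AddCommMonoid Q] (q : Q) :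
    AddMonoidAlgebra k Q := AddMonoidAlgebra.single q 1

/-- A binomial ideal is one generated by binomials `t^u − λ t^v`, `λ ∈ k`
possibly `0`. -/
def IsBinomialIdeal (I : Ideal (AddMonoidAlgebra k Q)) : Prop :=
  ∃ S : Set (AddMonoidAlgebra k Q), I = Ideal.span S ∧
    ∀ f ∈ S, ∃ (u v : Q) (lam : k), f = mono k u - lam • mono k v

/-- The congruence induced by a binomial ideal. -/
def indCong (I : Ideal (AddMonoidAlgebra k Q)) (u v : Q) : Prop :=
  ∃ lam : k, lam ≠ 0 ∧ mono k u - lam • mono k v ∈ I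

/-- A binomial ideal is cellular if every monomial is a nonzerodivisor or
nilpotent modulo `I`. -/
def IsCellular (I : Ideal (AddMonoidAlgebra k Q)) : Prop :=
  ∀ q : Q, (∀ f : AddMonoidAlgebra k Q, f * mono k q ∈ I → f ∈ I) ∨
    ∃ n : ℕ, 0 < n ∧ (mono k q) ^ n ∈ I

lemma mono_mul (u v : Q) : mono k u * mono k v = mono k (u + v) := by
  simp [mono, AddMonoidAlgebra.single_mul_single]

lemma mono_pow (q : Q) (n : ℕ) : (mono k q) ^ n = mono k (n • q) := by
  induction n with
  | zero => simp [mono, AddMonoidAlgebra.one_def]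
  | succ m ih => rw [pow_succ, ih, mono_mul, succ_nsmul]

lemma smul_mem_ideal {I : Ideal (AddMonoidAlgebra k Q)} (c : k)
    {x : AddMonoidAlgebra k Q} (hx : x ∈ I) : c • x ∈ I := by
  rw [show c • x = (c • (1 : AddMonoidAlgebra k Q)) * x by
    rw [smul_mul_assoc, one_mul]]
  exact I.mul_mem_left _ hx

lemma mem_of_smul_mem_ideal {I : Ideal (AddMonoidAlgebra k Q)} {c : k} (hc : c ≠ 0)
    {x : AddMonoidAlgebra k Q} (hx : c • x ∈ I) : x ∈ I := by
  have := smul_mem_ideal c⁻¹ hx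
  rwa [smul_smul, inv_mul_cancel₀ hc, one_smul] at this

/-- If `I` is a cellular binomial ideal whose induced congruence has a
(nonidentity) nil class, then `I` contains a monomial; consequently `I` is
maximal among binomial ideals inducing its congruence. -/
theorem cellular_with_nil_contains_monomial_and_is_maximal
    (I : Ideal (AddMonoidAlgebra k Q)) (hbin : IsBinomialIdeal I)
    (hcell : IsCellular I)
    (hnil : ∃ q₀ : Q, (∀ a : Q, indCong I (a + q₀) q₀) ∧ ¬ indCong I q₀ 0) :
    (∃ q : Q, mono k q ∈ I) ∧
      ∀ J : Ideal (AddMonoidAlgebra k Q), IsBinomialIdeal J → I ≤ J →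
        (∀ u v : Q, indCong I u v ↔ indCong J u v) → J = I := by
  obtain ⟨q₀, hq, hne⟩ := hnil
  have key : mono k q₀ ∈ I := by
    rcases hcell q₀ with hnzd | ⟨n, hn, hpow⟩
    · obtain ⟨lam, hlam, hmem⟩ := hq q₀
      have h2 : (mono k q₀ - lam • mono (k := k) 0) * mono k q₀ ∈ I := by
        have : (mono k q₀ - lam • mono (k := k) 0) * mono k q₀
            = mono k (q₀ + q₀) - lam • mono k q₀ := by
          rw [sub_mul, smul_mul_assoc, mono_mul, mono_mul, zero_add]
        rw [this]; exact hmem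
      exact absurd ⟨lam, hlam, hnzd _ h2⟩ hne
    · have hp : mono k (n • q₀) ∈ I := by rw [← mono_pow]; exact hpow
      obtain ⟨lam, hlam, hmem⟩ := hq ((n - 1) • q₀)
      have heq : (n - 1) • q₀ + q₀ = n • q₀ := by
        conv_rhs => rw [show n = (n - 1) + 1 from (Nat.succ_pred_eq_of_pos hn).symm]
        rw [succ_nsmul]
      rw [heq] at hmem
      have : lam • mono k q₀ ∈ I := by
        have := I.sub_mem hp hmem
        simpa using this
      exact mem_of_smul_mem_ideal hlam this
  refine ⟨⟨q₀, key⟩, ?_⟩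
  intro J hJbin hle hcong
  have monoJI : ∀ u : Q, mono k u ∈ J → mono k u ∈ I := by
    intro u hu
    have h1 : mono k (u + q₀) ∈ I := by
      rw [← mono_mul]; exact I.mul_mem_left _ key
    have h2 : indCong J u (u + q₀) :=
      ⟨1, one_ne_zero, by simpa using J.sub_mem hu (hle h1)⟩
    obtain ⟨μ, hμ, hm⟩ := (hcong u (u + q₀)).mpr h2
    have := I.add_mem hm (smul_mem_ideal μ h1)
    simpa using this
  obtain ⟨S, hSpan, hSbin⟩ := hJbin
  refine le_antisymm ?_ hle
  rw [hSpan, Ideal.span_le]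
  intro f hf
  have hfJ : f ∈ J := hSpan ▸ Ideal.subset_span hf
  obtain ⟨u, v, lam, rfl⟩ := hSbin f hf
  by_cases hlam : lam = 0
  · subst hlam
    simp only [zero_smul, sub_zero] at hfJ ⊢
    exact monoJI u hfJ
  · obtain ⟨μ, hμ, hm⟩ := (hcong u v).mpr ⟨lam, hlam, hfJ⟩
    by_cases hμl : μ = lam
    · subst hμl; exact hm
    · have hv : mono k v ∈ J := by
        have hdiff : (μ - lam) • mono k v ∈ J := by
          have := J.sub_mem hfJ (hle hm)
          have heq : mono k u - lam • mono k v - (mono k u - μ • mono k v)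
              = (μ - lam) • mono k v := by
            rw [sub_smul]; ring
          rwa [heq] at this
        exact mem_of_smul_mem_ideal (sub_ne_zero_of_ne hμl) hdiff
      have hvI : mono k v ∈ I := monoJI v hv
      have huI : mono k u ∈ I := by
        have := I.add_mem hm (smul_mem_ideal μ hvI)
        simpa using this
      exact I.sub_mem huI (smul_mem_ideal lam hvI)
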